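/- Let f ∈ L²(ℝ) satisfy f(s) = f(−1/s) for almost every s ≠ 0, and let f̃(κ) = f(z₊(κ)) with z₊(κ) = (κ + √(κ² + 4))/2. Then for every z₀ ∈ ℂ with Im z₀ ≠ 0, both integrals below converge absolutely and ∫_ℝ f(s)/(s − z₀) ds = ∫_ℝ f̃(κ)/(κ − (z₀ − 1/z₀)) dκ. (This rests on the pointwise kernel identity: for real s ≠ 0 and z ∈ ℂ \ ℝ, 1/(s − z) + (1/s²) · 1/((−1/s) − z) = (1 + 1/s²)/((s − 1/s) − (z − 1/z)).) -/

import Mathlib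

open MeasureTheory Filter Set
open scoped Topology ENNReal

noncomputable section

/-- `z₊(κ) = (κ + √(κ² + 4))/2`, the positive solution of `s - 1/s = κ`. -/
def zplus (k : ℝ) : ℝ := (k + Real.sqrt (k ^ 2 + 4)) / 2

lemma zplus_pos (k : ℝ) : 0 < zplus k := by
  have h : |k| < Real.sqrt (k ^ 2 + 4) := by
    rw [← Real.sqrt_sq_eq_abs]
    exact Real.sqrt_lt_sqrt (sq_nonneg k) (by linarith)
  have h2 := (abs_lt.1 h).1
  unfold zplus; linarith

lemma zplus_spec (k : ℝ) : zplus k - (zplus k)⁻¹ = k := by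
  have hp := zplus_pos k
  have hs : Real.sqrt (k ^ 2 + 4) ^ 2 = k ^ 2 + 4 := Real.sq_sqrt (by positivity)
  have hne : zplus k ≠ 0 := ne_of_gt hp
  field_simp
  unfold zplus at *
  nlinarith [hs, Real.sqrt_nonneg (k ^ 2 + 4)]

lemma psi_injOn : InjOn (fun s : ℝ => s - s⁻¹) (Ioi (0 : ℝ)) := by
  have : StrictMonoOn (fun s : ℝ => s - s⁻¹) (Ioi (0 : ℝ)) := by
    intro a ha b hb hab
    have h1 : b⁻¹ < a⁻¹ := by
      exact inv_strictAnti₀ ha hab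
    simp only
    linarith
  exact this.injOn

lemma zplus_psi {s : ℝ} (hs : 0 < s) : zplus (s - s⁻¹) = s := by
  apply psi_injOn (mem_Ioi.2 (zplus_pos _)) (mem_Ioi.2 hs)
  simpa using zplus_spec (s - s⁻¹)

lemma psi_image : (fun s : ℝ => s - s⁻¹) '' (Ioi (0 : ℝ)) = univ := by
  ext k
  simp only [mem_image, mem_univ, iff_true]
  exact ⟨zplus k, mem_Ioi.2 (zplus_pos k), zplus_spec k⟩

lemma phi_image : (fun s : ℝ => -s⁻¹) '' (Ioi (0 : ℝ)) = Iio (0 : ℝ) := by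
  ext u
  constructor
  · rintro ⟨s, hs, rfl⟩
    have : (0:ℝ) < s⁻¹ := inv_pos.2 hs
    simpa using this
  · intro hu
    refine ⟨-u⁻¹, ?_, ?_⟩
    · have : u < 0 := hu
      have : (0:ℝ) < -u⁻¹ := by
        have := inv_neg''.2 this
        linarith
      exact mem_Ioi.2 this
    · show -(-u⁻¹)⁻¹ = u
      rw [inv_neg, inv_inv, neg_neg]

lemma real_sub_ne {z : ℂ} (hz : z.im ≠ 0) (x : ℝ) : (x : ℂ) - z ≠ 0 := by
  intro h
  apply hz
  have := congrArg Complex.im h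
  simpa using this

/-- For `f ∈ L²(ℝ)` with `f(s) = f(-1/s)` a.e. and `z₀ ∈ ℂ` with
`Im z₀ ≠ 0`, both Cauchy-type integrals converge absolutely and
`∫_ℝ f(s)/(s − z₀) ds = ∫_ℝ f(z₊(κ))/(κ − (z₀ − 1/z₀)) dκ`. -/
theorem cauchy_kernel_change_of_variables (f : ℝ → ℂ)
    (hf : MemLp f 2 (volume : Measure ℝ))
    (hsym : ∀ᵐ s : ℝ, s ≠ 0 → f s = f (-1 / s))
    (z₀ : ℂ) (hz₀ : z₀.im ≠ 0) :
    Integrable (fun s : ℝ => f s / ((s : ℂ) - z₀)) ∧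
    Integrable (fun κ : ℝ => f (zplus κ) / ((κ : ℂ) - (z₀ - 1 / z₀))) ∧
    (∫ s : ℝ, f s / ((s : ℂ) - z₀)) =
      ∫ κ : ℝ, f (zplus κ) / ((κ : ℂ) - (z₀ - 1 / z₀)) := by
  have hz0ne : z₀ ≠ 0 := by intro h; apply hz₀; rw [h]; simp
  set w : ℂ := z₀ - 1 / z₀ with hw_def
  have hwim : w.im ≠ 0 := by
    have h1 : w.im = z₀.im * (1 + (Complex.normSq z₀)⁻¹) := by
      rw [hw_def]
      simp [Complex.sub_im, Complex.div_im, Complex.normSq]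
      field_simp
      ring
    rw [h1]
    have h2 : (0:ℝ) < Complex.normSq z₀ := Complex.normSq_pos.2 hz0ne
    have h3 : (0:ℝ) < 1 + (Complex.normSq z₀)⁻¹ := by positivity
    exact mul_ne_zero hz₀ (ne_of_gt h3)
  -- the kernel is in L²
  have hker : MemLp (fun s : ℝ => ((s : ℂ) - z₀)⁻¹) 2 (volume : Measure ℝ) := by
    have hcont : Continuous fun s : ℝ => ((s : ℂ) - z₀)⁻¹ :=
      (Complex.continuous_ofReal.sub continuous_const).inv₀ (fun x => real_sub_ne hz₀ x)
    rw [memLp_two_iff_integrable_sq_norm hcont.aestronglyMeasurable]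
    have key : Integrable (fun x : ℝ => ((x - z₀.re) ^ 2 + z₀.im ^ 2)⁻¹) := by
      have step1 : Integrable (fun x : ℝ => (1 + (x / z₀.im) ^ 2)⁻¹) :=
        integrable_inv_one_add_sq.comp_div hz₀
      have step2 : Integrable (fun x : ℝ => (1 + ((x - z₀.re) / z₀.im) ^ 2)⁻¹) :=
        step1.comp_sub_right z₀.re
      have heq : (fun x : ℝ => ((x - z₀.re) ^ 2 + z₀.im ^ 2)⁻¹) =
          fun x : ℝ => (z₀.im ^ 2)⁻¹ * (1 + ((x - z₀.re) / z₀.im) ^ 2)⁻¹ := by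
        funext x
        rw [← mul_inv]
        congr 1
        field_simp
        ring
      rw [heq]
      exact step2.const_mul _
    apply key.congr
    filter_upwards with x
    rw [norm_inv, inv_pow]
    congr 1
    rw [Complex.sq_norm, Complex.normSq_apply]
    simp [pow_two]
  -- first integrability
  have hF : Integrable (fun s : ℝ => f s / ((s : ℂ) - z₀)) := by
    have hp : (1 : ℝ≥0∞) / 1 = 1 / 2 + 1 / 2 := by
      rw [ENNReal.div_add_div_same]
      norm_num
      rw [ENNReal.div_self] <;> norm_num
    have := (hf.smul hker : MemLp ((fun s : ℝ => ((s : ℂ) - z₀)⁻¹) • f) 1 volume)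
    rw [memLp_one_iff_integrable] at this
    apply this.congr
    filter_upwards with s
    simp [Pi.smul_apply, smul_eq_mul, div_eq_mul_inv, mul_comm]
  -- nonzero denominators for positive s
  have hsne : ∀ s : ℝ, 0 < s → (s : ℂ) ≠ 0 := by
    intro s hs; exact_mod_cast ne_of_gt hs
  -- change of variables φ(s) = -1/s from Ioi 0 to Iio 0
  have hφderiv : ∀ x ∈ Ioi (0:ℝ), HasDerivWithinAt (fun s : ℝ => -s⁻¹) ((x ^ 2)⁻¹) (Ioi 0) x := by
    intro x hx
    have := (hasDerivAt_inv (ne_of_gt (mem_Ioi.1 hx))).fun_neg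
    simpa using this.hasDerivWithinAt
  have hφinj : InjOn (fun s : ℝ => -s⁻¹) (Ioi (0:ℝ)) := by
    intro a ha b hb h
    simp only [neg_inj] at h
    exact inv_injective h
  have hψderiv : ∀ x ∈ Ioi (0:ℝ),
      HasDerivWithinAt (fun s : ℝ => s - s⁻¹) (1 + (x ^ 2)⁻¹) (Ioi 0) x := by
    intro x hx
    have := (hasDerivAt_id x).fun_sub (hasDerivAt_inv (ne_of_gt (mem_Ioi.1 hx)))
    simpa [sub_neg_eq_add] using this.hasDerivWithinAt
  -- symmetry a.e. on Ioi 0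
  have hsym' : ∀ᵐ s ∂(volume.restrict (Ioi (0:ℝ))), f (-s⁻¹) = f s := by
    filter_upwards [ae_restrict_of_ae hsym, ae_restrict_mem measurableSet_Ioi] with s h1 h2
    have := h1 (ne_of_gt (mem_Ioi.1 h2))
    rw [neg_div, one_div] at this
    exact this.symm
  -- abbreviations
  set A : ℝ → ℂ := fun s => f s / ((s : ℂ) - z₀) with hA_def
  set G : ℝ → ℂ := fun κ => f (zplus κ) / ((κ : ℂ) - w) with hG_def
  -- integrability of the φ-pulled-back integrand
  have hIio : IntegrableOn A (Iio (0:ℝ)) ↔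
      IntegrableOn (fun x => |(x ^ 2)⁻¹| • A (-x⁻¹)) (Ioi (0:ℝ)) := by
    rw [← phi_image]
    exact integrableOn_image_iff_integrableOn_abs_deriv_smul measurableSet_Ioi hφderiv hφinj A
  have hB : IntegrableOn (fun x => |(x ^ 2)⁻¹| • A (-x⁻¹)) (Ioi (0:ℝ)) :=
    hIio.mp hF.integrableOn
  have hB' : IntegrableOn (fun x : ℝ => |(x ^ 2)⁻¹| • (f x / (((-x⁻¹ : ℝ) : ℂ) - z₀)))
      (Ioi (0:ℝ)) := by
    apply hB.congr
    filter_upwards [hsym'] with x hx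
    rw [hA_def]
    simp only
    rw [hx]
  -- the pointwise kernel identity on Ioi 0
  have hkernel : ∀ x ∈ Ioi (0:ℝ),
      |1 + (x ^ 2)⁻¹| • G (x - x⁻¹) =
        A x + |(x ^ 2)⁻¹| • (f x / (((-x⁻¹ : ℝ) : ℂ) - z₀)) := by
    intro x hx
    have hx0 : (0:ℝ) < x := mem_Ioi.1 hx
    have hxne : (x:ℂ) ≠ 0 := hsne x hx0
    have h1 : (x:ℂ) - z₀ ≠ 0 := real_sub_ne hz₀ x
    have h2 : ((-x⁻¹ : ℝ) : ℂ) - z₀ ≠ 0 := real_sub_ne hz₀ _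
    have h3 : ((x - x⁻¹ : ℝ) : ℂ) - w ≠ 0 := real_sub_ne hwim _
    have habs1 : |1 + (x ^ 2)⁻¹| = 1 + (x ^ 2)⁻¹ := abs_of_pos (by positivity)
    have habs2 : |(x ^ 2)⁻¹| = (x ^ 2)⁻¹ := abs_of_pos (by positivity)
    rw [habs1, habs2, hG_def, hA_def]
    simp only [zplus_psi hx0]
    have hc2 : ((-x⁻¹ : ℝ) : ℂ) = -(x:ℂ)⁻¹ := by push_cast; ring
    have hc3 : ((x - x⁻¹ : ℝ) : ℂ) = (x:ℂ) - (x:ℂ)⁻¹ := by push_cast; ring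
    rw [hc2] at h2 ⊢
    rw [hc3] at h3 ⊢
    rw [Complex.real_smul, Complex.real_smul]
    push_cast
    rw [hw_def] at h3 ⊢
    have h2' : (1:ℂ) + ↑x * z₀ ≠ 0 := by
      have key : (-(↑x)⁻¹ - z₀) * ↑x = -(1 + ↑x * z₀) := by
        field_simp
        ring
      intro h
      exact mul_ne_zero h2 hxne (by rw [key, h, neg_zero])
    rw [← mul_div_assoc, ← mul_div_assoc]
    rw [div_add_div _ _ h1 h2]
    rw [div_eq_div_iff h3 (mul_ne_zero h1 h2)]
    field_simp
    ring
  -- integrability of the ψ-pulled-back integrand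
  have hC : IntegrableOn (fun x => |1 + (x ^ 2)⁻¹| • G (x - x⁻¹)) (Ioi (0:ℝ)) := by
    apply (hF.integrableOn.add hB').congr
    rw [EventuallyEq, ae_restrict_iff' measurableSet_Ioi]
    filter_upwards with x hx
    exact (hkernel x hx).symm
  -- second integrability
  have hG : Integrable G := by
    have := (integrableOn_image_iff_integrableOn_abs_deriv_smul measurableSet_Ioi
      hψderiv psi_injOn G).mpr hC
    rwa [psi_image, integrableOn_univ] at this
  refine ⟨hF, hG, ?_⟩
  -- the integral identity
  have e1 : (∫ s, A s) = (∫ s in Iio (0:ℝ), A s) + ∫ s in Ioi (0:ℝ), A s := by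
    rw [← integral_add_compl measurableSet_Iio hF, compl_Iio]
    congr 1
    exact (setIntegral_congr_set Ioi_ae_eq_Ici).symm
  have e2 : (∫ s in Iio (0:ℝ), A s) =
      ∫ x in Ioi (0:ℝ), |(x ^ 2)⁻¹| • (f x / (((-x⁻¹ : ℝ) : ℂ) - z₀)) := by
    rw [← phi_image,
      integral_image_eq_integral_abs_deriv_smul measurableSet_Ioi hφderiv hφinj A]
    apply integral_congr_ae
    filter_upwards [hsym'] with x hx
    rw [hA_def]
    simp only
    rw [hx]
  have e3 : (∫ κ, G κ) = ∫ x in Ioi (0:ℝ), |1 + (x ^ 2)⁻¹| • G (x - x⁻¹) := by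
    rw [← setIntegral_univ, ← psi_image,
      integral_image_eq_integral_abs_deriv_smul measurableSet_Ioi hψderiv psi_injOn G]
  have e4 : (∫ x in Ioi (0:ℝ), |1 + (x ^ 2)⁻¹| • G (x - x⁻¹)) =
      (∫ s in Ioi (0:ℝ), A s) +
        ∫ x in Ioi (0:ℝ), |(x ^ 2)⁻¹| • (f x / (((-x⁻¹ : ℝ) : ℂ) - z₀)) := by
    rw [← integral_add hF.integrableOn hB']
    exact setIntegral_congr_fun measurableSet_Ioi (fun x hx => hkernel x hx)
  rw [e1, e2, e3, e4]
  ring
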